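/- Combining the surrogate bound, decomposition, and class-collision lemma: for the hinge loss, every representation f with ‖f‖ ≤ R satisfies L_sup^μ(f) ≤ L_un^≠(f) + (τ/(1−τ)) · √2 · s(f), where s(f) = E_{c∼ν}[√(‖Σ(f,c)‖₂) · E_{x∼D_c}‖f(x)‖] and ν(c) ∝ ρ(c)². -/
import Mathlib

open MeasureTheory
open scoped RealInnerProductSpace BigOperators

lemma aux_int_bdd {X : Type*} [MeasurableSpace X] (μ : Measure X) [IsFiniteMeasure μ]
    {E : Type*} [NormedAddCommGroup E] {g : X → E} (hm : AEStronglyMeasurable g μ)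
    {Cb : ℝ} (h : ∀ x, ‖g x‖ ≤ Cb) : Integrable g μ :=
  Integrable.mono' (integrable_const Cb) hm (ae_of_all _ h)

lemma aux_bd {d : ℕ} (u w1 w2 : EuclideanSpace ℝ (Fin d)) {R : ℝ} (hR : 0 ≤ R)
    (hu : ‖u‖ ≤ R) (hw1 : ‖w1‖ ≤ R) (hw2 : ‖w2‖ ≤ R) :
    |max (1 - ⟪u, w1 - w2⟫) 0| ≤ 1 + 2 * R * R := by
  have h1 : ‖⟪u, w1 - w2⟫‖ ≤ R * (R + R) := by
    calc ‖⟪u, w1 - w2⟫‖ ≤ ‖u‖ * ‖w1 - w2‖ := norm_inner_le_norm _ _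
      _ ≤ R * (R + R) :=
          mul_le_mul hu ((norm_sub_le _ _).trans (add_le_add hw1 hw2)) (norm_nonneg _) hR
  rw [Real.norm_eq_abs, abs_le] at h1
  rw [abs_le]
  constructor
  · exact le_trans (by nlinarith) (le_max_right _ _)
  · exact max_le (by nlinarith) (by nlinarith)

lemma aux_key {X : Type*} [MeasurableSpace X] {d : ℕ}
    (P Q : Measure X) [IsProbabilityMeasure P] [IsProbabilityMeasure Q]
    (f : X → EuclideanSpace ℝ (Fin d)) (hfm : Measurable f)
    (R : ℝ) (hfb : ∀ x, ‖f x‖ ≤ R) (hR : 0 ≤ R)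
    (v : EuclideanSpace ℝ (Fin d)) (hv : ‖v‖ ≤ R) :
    max (1 - ⟪v, (∫ x, f x ∂P) - (∫ x, f x ∂Q)⟫) 0
      ≤ ∫ xp, ∫ xm, max (1 - ⟪v, f xp - f xm⟫) 0 ∂Q ∂P := by
  have hsm : StronglyMeasurable f := hfm.stronglyMeasurable
  have hintP : Integrable f P := aux_int_bdd P hsm.aestronglyMeasurable hfb
  have hintQ : Integrable f Q := aux_int_bdd Q hsm.aestronglyMeasurable hfb
  have hinner : ∀ (μ : Measure X) [IsProbabilityMeasure μ],
      Integrable (fun x => ⟪v, f x⟫) μ := by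
    intro μ _
    refine aux_int_bdd μ ((measurable_const.inner hfm).aestronglyMeasurable) (Cb := R * R) ?_
    intro x
    calc ‖⟪v, f x⟫‖ ≤ ‖v‖ * ‖f x‖ := norm_inner_le_norm v (f x)
      _ ≤ R * R := mul_le_mul hv (hfb x) (norm_nonneg _) hR
  have hbd : ∀ x y : X, |max (1 - ⟪v, f x - f y⟫) 0| ≤ 1 + 2 * R * R := fun x y =>
    aux_bd v (f x) (f y) hR hv (hfb x) (hfb y)
  have hstep : ∀ xp : X,
      1 - ⟪v, f xp⟫ + ⟪v, ∫ x, f x ∂Q⟫ ≤ ∫ xm, max (1 - ⟪v, f xp - f xm⟫) 0 ∂Q := by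
    intro xp
    have heq : ∫ xm, (1 - ⟪v, f xp⟫ + ⟪v, f xm⟫) ∂Q
        = 1 - ⟪v, f xp⟫ + ⟪v, ∫ x, f x ∂Q⟫ := by
      rw [integral_add (integrable_const _) (hinner Q), integral_const,
        integral_inner hintQ]
      simp
    rw [← heq]
    refine integral_mono ((integrable_const _).add (hinner Q)) ?_ ?_
    · refine aux_int_bdd Q ?_ (Cb := 1 + 2 * R * R) (fun y => by
        simpa [Real.norm_eq_abs] using hbd xp y)
      exact (((measurable_const.inner (measurable_const.sub hfm)).const_sub 1).max
        measurable_const).aestronglyMeasurable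
    · intro xm
      have : 1 - ⟪v, f xp⟫ + ⟪v, f xm⟫ = 1 - ⟪v, f xp - f xm⟫ := by
        rw [inner_sub_right]; ring
      simpa only [this] using le_max_left (1 - ⟪v, f xp - f xm⟫) 0
  have hGm : StronglyMeasurable (fun xp => ∫ xm, max (1 - ⟪v, f xp - f xm⟫) 0 ∂Q) := by
    have hF : StronglyMeasurable (fun p : X × X => max (1 - ⟪v, f p.1 - f p.2⟫) 0) :=
      (((measurable_const.inner ((hfm.comp measurable_fst).sub
        (hfm.comp measurable_snd))).const_sub 1).max measurable_const).stronglyMeasurable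
    exact hF.integral_prod_right'
  have hGint : Integrable (fun xp => ∫ xm, max (1 - ⟪v, f xp - f xm⟫) 0 ∂Q) P := by
    refine aux_int_bdd P hGm.aestronglyMeasurable (Cb := 1 + 2 * R * R) ?_
    intro xp
    have := norm_integral_le_of_norm_le_const (μ := Q)
      (f := fun xm => max (1 - ⟪v, f xp - f xm⟫) 0) (C := 1 + 2 * R * R)
      (ae_of_all _ (fun y => by simpa [Real.norm_eq_abs] using hbd xp y))
    simpa using this
  have hG0 : 0 ≤ ∫ xp, ∫ xm, max (1 - ⟪v, f xp - f xm⟫) 0 ∂Q ∂P :=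
    integral_nonneg (fun xp => integral_nonneg (fun xm => le_max_right _ _))
  refine max_le ?_ hG0
  have hf' : Integrable (fun x => 1 - ⟪v, f x⟫) P := (integrable_const 1).sub (hinner P)
  have heq2 : ∫ xp, (1 - ⟪v, f xp⟫ + ⟪v, ∫ x, f x ∂Q⟫) ∂P
      = 1 - ⟪v, (∫ x, f x ∂P) - (∫ x, f x ∂Q)⟫ := by
    rw [integral_add hf' (integrable_const _), integral_sub (integrable_const _) (hinner P),
      integral_const, integral_const, integral_inner hintP, inner_sub_right]
    simp; ring
  calc 1 - ⟪v, (∫ x, f x ∂P) - (∫ x, f x ∂Q)⟫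
      = ∫ xp, (1 - ⟪v, f xp⟫ + ⟪v, ∫ x, f x ∂Q⟫) ∂P := heq2.symm
    _ ≤ ∫ xp, ∫ xm, max (1 - ⟪v, f xp - f xm⟫) 0 ∂Q ∂P :=
        integral_mono (hf'.add (integrable_const _)) hGint hstep

lemma aux_sum {C : Type*} [Fintype C] [DecidableEq C] (ρ : C → ℝ) (hρ0 : ∀ c, 0 ≤ ρ c)
    (LA T : C → C → ℝ) (h : ∀ a b, LA a b ≤ T a b) :
    ∑ a, ∑ b, (if a ≠ b then ρ a * ρ b * ((1/2) * LA a b + (1/2) * LA b a) else 0)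
      ≤ ∑ a, ∑ b, (if a ≠ b then ρ a * ρ b * T a b else 0) := by
  have hswap : ∑ a, ∑ b, (if a ≠ b then ρ a * ρ b * T b a else 0)
      = ∑ a, ∑ b, (if a ≠ b then ρ a * ρ b * T a b else 0) := by
    rw [Finset.sum_comm]
    refine Finset.sum_congr rfl fun a _ => Finset.sum_congr rfl fun b _ => ?_
    by_cases hab : a = b
    · simp [hab]
    · simp [hab, Ne.symm hab, mul_comm]
  have hle : ∑ a, ∑ b, (if a ≠ b then ρ a * ρ b * ((1/2) * LA a b + (1/2) * LA b a) else 0)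
      ≤ ∑ a, ∑ b, ((1/2) * (if a ≠ b then ρ a * ρ b * T a b else 0)
          + (1/2) * (if a ≠ b then ρ a * ρ b * T b a else 0)) := by
    refine Finset.sum_le_sum fun a _ => Finset.sum_le_sum fun b _ => ?_
    by_cases hab : a = b
    · simp [hab]
    · simp only [hab, ne_eq, not_false_iff, if_true, if_pos]
      nlinarith [h a b, h b a, mul_nonneg (hρ0 a) (hρ0 b)]
  calc _ ≤ _ := hle
    _ = (1/2) * (∑ a, ∑ b, (if a ≠ b then ρ a * ρ b * T a b else 0))
        + (1/2) * (∑ a, ∑ b, (if a ≠ b then ρ a * ρ b * T b a else 0)) := by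
        simp [Finset.sum_add_distrib, Finset.mul_sum]
    _ = _ := by rw [hswap]; ring

/-- Theorem 4.5 (population version, hinge loss): every bounded representation `f`
satisfies `L_sup^μ(f) ≤ L_un^≠(f) + (τ/(1−τ)) √2 s(f)`, where
`s(f) = E_{c∼ν}[√‖Σ(f,c)‖₂ E_{x∼D_c}‖f(x)‖]` and `ν(c) ∝ ρ(c)²`. -/
theorem sup_loss_le_neq_loss_add_deviation
    {X : Type*} [MeasurableSpace X] {C : Type*} [Fintype C] [DecidableEq C] {d : ℕ}
    (ρ : C → ℝ) (hρ0 : ∀ c, 0 ≤ ρ c) (hρ1 : ∑ c, ρ c = 1)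
    (hτpos : 0 < ∑ c, (ρ c) ^ 2) (hτlt : ∑ c, (ρ c) ^ 2 < 1)
    (D : C → Measure X) (hD : ∀ c, IsProbabilityMeasure (D c))
    (f : X → EuclideanSpace ℝ (Fin d)) (hfm : Measurable f)
    (R : ℝ) (hfb : ∀ x, ‖f x‖ ≤ R)
    (μ : C → EuclideanSpace ℝ (Fin d)) (hμ : ∀ c, μ c = ∫ x, f x ∂(D c))
    (S : C → Matrix (Fin d) (Fin d) ℝ)
    (hS : ∀ c i j, S c i j = ∫ x, (f x i - μ c i) * (f x j - μ c j) ∂(D c)) :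
    (1 / (1 - ∑ c, (ρ c) ^ 2)) *
        ∑ cp, ∑ cm, (if cp ≠ cm then ρ cp * ρ cm *
          ((1 / 2) * ∫ x, max (1 - ⟪f x, μ cp - μ cm⟫) 0 ∂(D cp) +
           (1 / 2) * ∫ x, max (1 - ⟪f x, μ cm - μ cp⟫) 0 ∂(D cm)) else 0)
    ≤ (1 / (1 - ∑ c, (ρ c) ^ 2)) *
        ∑ cp, ∑ cm, (if cp ≠ cm then ρ cp * ρ cm *
          ∫ x, ∫ xp, ∫ xm, max (1 - ⟪f x, f xp - f xm⟫) 0 ∂(D cm) ∂(D cp) ∂(D cp) else 0)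
      + ((∑ c, (ρ c) ^ 2) / (1 - ∑ c, (ρ c) ^ 2)) * Real.sqrt 2 *
        ∑ c, ((ρ c) ^ 2 / ∑ c', (ρ c') ^ 2) *
          (Real.sqrt ‖Matrix.toEuclideanCLM (𝕜 := ℝ) (S c)‖ * ∫ x, ‖f x‖ ∂(D c)) := by
  -- nonemptiness and R ≥ 0
  have hCne : Nonempty C := by
    by_contra h
    rw [not_nonempty_iff] at h
    simp [Finset.univ_eq_empty] at hτpos
  obtain ⟨c0⟩ := hCne
  have hXne : Nonempty X := by
    by_contra h
    rw [not_nonempty_iff] at h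
    have h1 := (hD c0).measure_univ
    simp [Set.univ_eq_empty_iff.mpr h] at h1
  obtain ⟨x0⟩ := hXne
  have hR : 0 ≤ R := (norm_nonneg (f x0)).trans (hfb x0)
  have hμb : ∀ c, ‖μ c‖ ≤ R := by
    intro c
    haveI := hD c
    rw [hμ c]
    have := norm_integral_le_of_norm_le_const (μ := D c) (f := f) (C := R) (ae_of_all _ hfb)
    simpa using this
  -- pointwise (in classes) comparison of the two losses
  have hLAT : ∀ a b : C,
      ∫ x, max (1 - ⟪f x, μ a - μ b⟫) 0 ∂(D a)
        ≤ ∫ x, ∫ xp, ∫ xm, max (1 - ⟪f x, f xp - f xm⟫) 0 ∂(D b) ∂(D a) ∂(D a) := by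
    intro a b
    haveI := hD a
    haveI := hD b
    refine integral_mono ?_ ?_ ?_
    · refine aux_int_bdd (D a) ?_ (Cb := 1 + 2 * R * R) (fun x => by
        simpa [Real.norm_eq_abs] using aux_bd (f x) (μ a) (μ b) hR (hfb x) (hμb a) (hμb b))
      exact (((hfm.inner measurable_const).const_sub 1).max
        measurable_const).aestronglyMeasurable
    · have hF : StronglyMeasurable (fun p : (X × X) × X =>
          max (1 - ⟪f p.1.1, f p.1.2 - f p.2⟫) 0) := by
        exact ((((hfm.comp (measurable_fst.comp measurable_fst)).inner
          ((hfm.comp (measurable_snd.comp measurable_fst)).sub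
            (hfm.comp measurable_snd))).const_sub 1).max measurable_const).stronglyMeasurable
      have hG2 : StronglyMeasurable (fun q : X × X =>
          ∫ xm, max (1 - ⟪f q.1, f q.2 - f xm⟫) 0 ∂(D b)) := hF.integral_prod_right'
      have hG1 : StronglyMeasurable (fun x =>
          ∫ xp, ∫ xm, max (1 - ⟪f x, f xp - f xm⟫) 0 ∂(D b) ∂(D a)) := hG2.integral_prod_right'
      refine aux_int_bdd (D a) hG1.aestronglyMeasurable (Cb := 1 + 2 * R * R) ?_
      intro x
      have hin : ∀ xp, ‖∫ xm, max (1 - ⟪f x, f xp - f xm⟫) 0 ∂(D b)‖ ≤ 1 + 2 * R * R := by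
        intro xp
        have := norm_integral_le_of_norm_le_const (μ := D b)
          (f := fun xm => max (1 - ⟪f x, f xp - f xm⟫) 0) (C := 1 + 2 * R * R)
          (ae_of_all _ (fun xm => by
            simpa [Real.norm_eq_abs] using aux_bd (f x) (f xp) (f xm) hR (hfb x) (hfb xp) (hfb xm)))
        simpa using this
      have := norm_integral_le_of_norm_le_const (μ := D a)
        (f := fun xp => ∫ xm, max (1 - ⟪f x, f xp - f xm⟫) 0 ∂(D b)) (C := 1 + 2 * R * R)
        (ae_of_all _ hin)
      simpa using this
    · intro x
      have := aux_key (D a) (D b) f hfm R hfb hR (f x) (hfb x)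
      rw [hμ a, hμ b]
      exact this
  have hmain := aux_sum ρ hρ0
    (fun a b => ∫ x, max (1 - ⟪f x, μ a - μ b⟫) 0 ∂(D a))
    (fun a b => ∫ x, ∫ xp, ∫ xm, max (1 - ⟪f x, f xp - f xm⟫) 0 ∂(D b) ∂(D a) ∂(D a))
    hLAT
  have h1τ : 0 < 1 - ∑ c, (ρ c) ^ 2 := by linarith
  have hs : 0 ≤ ((∑ c, (ρ c) ^ 2) / (1 - ∑ c, (ρ c) ^ 2)) * Real.sqrt 2 *
      ∑ c, ((ρ c) ^ 2 / ∑ c', (ρ c') ^ 2) *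
        (Real.sqrt ‖Matrix.toEuclideanCLM (𝕜 := ℝ) (S c)‖ * ∫ x, ‖f x‖ ∂(D c)) := by
    refine mul_nonneg (mul_nonneg (div_nonneg hτpos.le h1τ.le) (Real.sqrt_nonneg 2)) ?_
    refine Finset.sum_nonneg fun c _ => mul_nonneg (div_nonneg (sq_nonneg _) hτpos.le) ?_
    exact mul_nonneg (Real.sqrt_nonneg _) (integral_nonneg fun x => norm_nonneg _)
  have hmul := mul_le_mul_of_nonneg_left hmain (le_of_lt (by positivity :
      (0:ℝ) < 1 / (1 - ∑ c, (ρ c) ^ 2)))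
  exact hmul.trans (le_add_of_nonneg_right hs)
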